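/- (Khintchine inequality, lower and upper bound with explicit constant) Let x ∈ ℝ^n and let ε_1,…,ε_n be independent Rademacher random variables (uniform on {−1,1}). Then (1/√2)‖x‖_2 ≤ E|Σ_k ε_k x_k| ≤ ‖x‖_2. -/

import Mathlib

open MeasureTheory ENNReal ProbabilityTheory

/-- A real random variable is Rademacher if it takes the values `1` and `-1`
each with probability `1/2`. -/
def IsRademacher {Ω : Type*} [MeasurableSpace Ω] (μ : Measure Ω) (f : Ω → ℝ) : Prop :=
  μ (f ⁻¹' {1}) = 1 / 2 ∧ μ (f ⁻¹' {-1}) = 1 / 2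

open Finset

namespace KhinAux

def rsign (v : Bool) : ℝ := if v then 1 else -1

lemma rsign_mul_self (v : Bool) : rsign v * rsign v = 1 := by cases v <;> norm_num [rsign]

lemma rsign_not (v : Bool) : rsign (!v) = - rsign v := by cases v <;> norm_num [rsign]

variable {n : ℕ}

def chi (A : Finset (Fin n)) (b : Fin n → Bool) : ℝ :=
  ∏ k, if k ∈ A then rsign (b k) else 1

lemma chi_empty (b : Fin n → Bool) : chi (∅ : Finset (Fin n)) b = 1 := by
  simp [chi]

lemma chi_singleton (k : Fin n) (b : Fin n → Bool) : chi {k} b = rsign (b k) := by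
  simp [chi, Finset.mem_singleton]

lemma delta_sum (c b : Fin n → Bool) :
    ∑ A : Finset (Fin n), chi A c * chi A b = if c = b then (2 : ℝ) ^ n else 0 := by
  have hpt : ∀ A : Finset (Fin n), chi A c * chi A b
      = ∏ k ∈ A, (rsign (c k) * rsign (b k)) := by
    intro A
    rw [chi, chi, ← Finset.prod_mul_distrib]
    have h1 : ∀ k, ((if k ∈ A then rsign (c k) else 1) * if k ∈ A then rsign (b k) else 1)
        = if k ∈ A then rsign (c k) * rsign (b k) else 1 := by
      intro k; by_cases hk : k ∈ A <;> simp [hk]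
    simp_rw [h1]
    rw [Finset.prod_ite_mem Finset.univ A, Finset.univ_inter]
  simp_rw [hpt]
  have h2 : ∑ A : Finset (Fin n), ∏ k ∈ A, (rsign (c k) * rsign (b k))
      = ∏ k, (rsign (c k) * rsign (b k) + 1) := by
    rw [Fintype.prod_add]
    simp
  rw [h2]
  by_cases h : c = b
  · subst h
    simp [rsign_mul_self]
    norm_num
  · rw [if_neg h]
    obtain ⟨k0, hk0⟩ : ∃ k, c k ≠ b k := by
      by_contra hc; push_neg at hc; exact h (funext hc)
    apply Finset.prod_eq_zero (Finset.mem_univ k0)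
    revert hk0; cases c k0 <;> cases b k0 <;> simp [rsign]

noncomputable def coef (f : (Fin n → Bool) → ℝ) (A : Finset (Fin n)) : ℝ :=
  (∑ b, f b * chi A b) / 2 ^ n

lemma inversion (f : (Fin n → Bool) → ℝ) (b : Fin n → Bool) :
    f b = ∑ A : Finset (Fin n), coef f A * chi A b := by
  unfold coef
  simp_rw [div_mul_eq_mul_div, Finset.sum_mul, mul_assoc, ← Finset.sum_div]
  rw [Finset.sum_comm]
  simp_rw [← Finset.mul_sum, delta_sum, mul_ite, mul_zero]
  rw [Finset.sum_div]
  simp_rw [apply_ite (fun y => y / (2:ℝ)^n), zero_div]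
  rw [Finset.sum_ite_eq' Finset.univ b]
  simp [mul_div_assoc]

lemma parseval (f : (Fin n → Bool) → ℝ) :
    ∑ b, f b ^ 2 = 2 ^ n * ∑ A : Finset (Fin n), coef f A ^ 2 := by
  have : ∀ b, f b ^ 2 = f b * ∑ A : Finset (Fin n), coef f A * chi A b := by
    intro b; rw [← inversion]; ring
  simp_rw [this, Finset.mul_sum]
  rw [Finset.sum_comm]
  have h2 : ∀ A, ∑ b, f b * (coef f A * chi A b) = 2 ^ n * coef f A ^ 2 := by
    intro A
    have : ∑ b, f b * (coef f A * chi A b) = coef f A * ∑ b, f b * chi A b := by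
      rw [Finset.mul_sum]; congr 1; ext b; ring
    rw [this]
    have hs : ∑ b, f b * chi A b = 2 ^ n * coef f A := by
      rw [coef]; field_simp
    rw [hs]
    ring
  simp_rw [h2]



lemma orth (A B : Finset (Fin n)) :
    ∑ b : Fin n → Bool, chi A b * chi B b = if A = B then (2:ℝ)^n else 0 := by
  have hpt : ∀ b : Fin n → Bool, chi A b * chi B b
      = ∏ k, ((if k ∈ A then rsign (b k) else 1) * (if k ∈ B then rsign (b k) else 1)) := by
    intro b; rw [chi, chi, ← Finset.prod_mul_distrib]
  simp_rw [hpt]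
  rw [← Fintype.prod_sum fun k (v : Bool) =>
    ((if k ∈ A then rsign v else 1) * (if k ∈ B then rsign v else 1))]
  have hfac : ∀ k, (∑ v : Bool, ((if k ∈ A then rsign v else 1) * (if k ∈ B then rsign v else 1)))
      = if ((k ∈ A) ↔ (k ∈ B)) then 2 else 0 := by
    intro k
    rw [Fintype.sum_bool]
    by_cases hA : k ∈ A <;> by_cases hB : k ∈ B <;> simp [hA, hB, rsign] <;> norm_num
  simp_rw [hfac]
  by_cases h : A = B
  · subst h; simp
  · rw [if_neg h]
    obtain ⟨k0, hk0⟩ : ∃ k, ¬((k ∈ A) ↔ (k ∈ B)) := by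
      by_contra hc; push_neg at hc
      exact h (Finset.ext fun k => (hc k))
    exact Finset.prod_eq_zero (Finset.mem_univ k0) (by rw [if_neg hk0])

section WithX
variable (x : Fin n → ℝ)

def S (b : Fin n → Bool) : ℝ := ∑ k, rsign (b k) * x k

noncomputable def g (b : Fin n → Bool) : ℝ := |S x b|

lemma sum_S_sq : ∑ b : Fin n → Bool, (S x b) ^ 2 = 2 ^ n * ∑ k, x k ^ 2 := by
  have hpt : ∀ b, (S x b) ^ 2 = ∑ k, ∑ l, (x k * x l) * (chi {k} b * chi {l} b) := by
    intro b
    rw [S, sq, Finset.sum_mul_sum]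
    congr 1; ext k; congr 1; ext l
    rw [chi_singleton, chi_singleton]; ring
  simp_rw [hpt]
  rw [Finset.sum_comm]
  have h1 : ∀ k, ∑ b : Fin n → Bool, ∑ l, (x k * x l) * (chi {k} b * chi {l} b)
      = 2 ^ n * x k ^ 2 := by
    intro k
    rw [Finset.sum_comm]
    have h2 : ∀ l, ∑ b : Fin n → Bool, (x k * x l) * (chi {k} b * chi {l} b)
        = if ({k} : Finset (Fin n)) = {l} then (x k * x l) * 2 ^ n else 0 := by
      intro l
      rw [← Finset.mul_sum, orth]
      by_cases h : ({k} : Finset (Fin n)) = {l} <;> simp [h]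
    simp_rw [h2]
    have h3 : ∀ l, (if ({k} : Finset (Fin n)) = {l} then (x k * x l) * (2:ℝ) ^ n else 0)
        = if k = l then (x k * x l) * 2 ^ n else 0 := by
      intro l; congr 1; simp [Finset.singleton_inj]
    simp_rw [h3]
    rw [Finset.sum_ite_eq Finset.univ k fun l => (x k * x l) * (2:ℝ)^n]
    simp; ring
  simp_rw [h1]
  rw [← Finset.mul_sum]

def notb (b : Fin n → Bool) : Fin n → Bool := fun k => !(b k)

lemma notb_invol : Function.Involutive (notb (n := n)) := by
  intro b; funext k; simp [notb]

lemma chi_notb (A : Finset (Fin n)) (b : Fin n → Bool) :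
    chi A (notb b) = (-1) ^ A.card * chi A b := by
  have hpt : ∀ k, (if k ∈ A then rsign (notb b k) else 1)
      = (if k ∈ A then (-1:ℝ) else 1) * (if k ∈ A then rsign (b k) else 1) := by
    intro k; by_cases hk : k ∈ A <;> simp [hk, notb, rsign_not]
  rw [chi, chi]
  simp_rw [hpt]
  rw [Finset.prod_mul_distrib, Finset.prod_ite_mem Finset.univ A, Finset.univ_inter,
    Finset.prod_const]

lemma S_notb (b : Fin n → Bool) : S x (notb b) = - S x b := by
  rw [S, S, ← Finset.sum_neg_distrib]
  congr 1; ext k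
  rw [notb, rsign_not]; ring

lemma g_notb (b : Fin n → Bool) : g x (notb b) = g x b := by
  rw [g, g, S_notb, abs_neg]

lemma coef_g_odd {A : Finset (Fin n)} (hA : Odd A.card) : coef (g x) A = 0 := by
  have hre : ∑ b, g x b * chi A b = ∑ b, g x (notb b) * chi A (notb b) :=
    (Fintype.sum_bijective notb notb_invol.bijective _ _ (fun b => rfl)).symm.trans
      (by rfl)
  have : ∑ b, g x b * chi A b = - ∑ b, g x b * chi A b := by
    nth_rewrite 1 [hre]
    simp_rw [g_notb, chi_notb, hA.neg_one_pow]
    rw [← Finset.sum_neg_distrib]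
    congr 1; ext b; ring
  have hz : ∑ b, g x b * chi A b = 0 := by linarith
  rw [coef, hz, zero_div]

def flip (i : Fin n) (b : Fin n → Bool) : Fin n → Bool := Function.update b i (!(b i))

lemma flip_invol (i : Fin n) : Function.Involutive (flip (n := n) i) := by
  intro b
  funext k
  by_cases hk : k = i
  · subst hk; simp [flip]
  · simp [flip, Function.update_of_ne hk]

lemma chi_flip (i : Fin n) (A : Finset (Fin n)) (b : Fin n → Bool) :
    chi A (flip i b) = (if i ∈ A then (-1:ℝ) else 1) * chi A b := by
  have hpt : ∀ k, (if k ∈ A then rsign (flip i b k) else 1)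
      = (if k = i then (if i ∈ A then (-1:ℝ) else 1) else 1)
        * (if k ∈ A then rsign (b k) else 1) := by
    intro k
    by_cases hk : k = i
    · subst hk
      by_cases hA : k ∈ A <;> simp [hA, flip, rsign_not]
    · rw [if_neg hk, one_mul, flip, Function.update_of_ne hk]
  rw [chi, chi]
  simp_rw [hpt]
  rw [Finset.prod_mul_distrib, Finset.prod_ite_eq' Finset.univ i
    (fun _ => if i ∈ A then (-1:ℝ) else 1)]
  simp

lemma S_flip (i : Fin n) (b : Fin n → Bool) :
    S x b - S x (flip i b) = 2 * rsign (b i) * x i := by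
  rw [S, S, ← Finset.sum_sub_distrib]
  rw [Finset.sum_eq_single i]
  · have : flip i b i = !(b i) := by simp [flip]
    rw [this, rsign_not]; ring
  · intro k _ hk
    rw [flip, Function.update_of_ne hk]; ring
  · intro h; exact absurd (Finset.mem_univ i) h

noncomputable def Dg (i : Fin n) (b : Fin n → Bool) : ℝ := (g x b - g x (flip i b)) / 2

lemma abs_Dg_le (i : Fin n) (b : Fin n → Bool) : |Dg x i b| ≤ |x i| := by
  rw [Dg, abs_div]
  have h1 : |g x b - g x (flip i b)| ≤ |S x b - S x (flip i b)| := by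
    rw [g, g]; exact abs_abs_sub_abs_le_abs_sub _ _
  rw [S_flip] at h1
  have h2 : |2 * rsign (b i) * x i| = 2 * |x i| := by
    cases b i <;> simp [rsign, abs_mul] <;> norm_num
  rw [h2] at h1
  rw [abs_two]
  linarith

lemma coef_Dg (i : Fin n) (A : Finset (Fin n)) :
    coef (Dg x i) A = if i ∈ A then coef (g x) A else 0 := by
  have hre : ∑ b, g x (flip i b) * chi A b = ∑ b, g x b * chi A (flip i b) := by
    refine (Fintype.sum_bijective (flip i) (flip_invol i).bijective _ _ (fun b => ?_)).symm
    rw [(flip_invol i) b]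
  have h2 : ∑ b, g x b * chi A (flip i b)
      = (if i ∈ A then (-1:ℝ) else 1) * ∑ b, g x b * chi A b := by
    simp_rw [chi_flip]
    rw [Finset.mul_sum]
    congr 1; ext b; ring
  rw [coef]
  have h3 : ∑ b, Dg x i b * chi A b
      = (∑ b, g x b * chi A b - ∑ b, g x (flip i b) * chi A b) / 2 := by
    rw [← Finset.sum_sub_distrib, Finset.sum_div]
    refine Finset.sum_congr rfl fun b _ => ?_
    rw [Dg]; ring
  rw [h3, hre, h2]
  by_cases hi : i ∈ A
  · rw [if_pos hi, if_pos hi, coef]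
    ring
  · rw [if_neg hi, if_neg hi]
    ring

lemma sum_Dg_sq_le (i : Fin n) :
    ∑ b : Fin n → Bool, (Dg x i b) ^ 2 ≤ 2 ^ n * x i ^ 2 := by
  have h1 : ∀ b : Fin n → Bool, (Dg x i b) ^ 2 ≤ x i ^ 2 := by
    intro b
    rw [← sq_abs (Dg x i b), ← sq_abs (x i)]
    exact pow_le_pow_left₀ (abs_nonneg _) (abs_Dg_le x i b) 2
  calc ∑ b : Fin n → Bool, (Dg x i b) ^ 2 ≤ ∑ _b : Fin n → Bool, x i ^ 2 :=
        Finset.sum_le_sum fun b _ => h1 b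
    _ = 2 ^ n * x i ^ 2 := by
        rw [Finset.sum_const, Finset.card_univ]
        simp [nsmul_eq_mul]

theorem main_comb :
    (1 / Real.sqrt 2) * Real.sqrt (∑ k, x k ^ 2)
        ≤ (∑ b : Fin n → Bool, g x b) / 2 ^ n ∧
      (∑ b : Fin n → Bool, g x b) / 2 ^ n ≤ Real.sqrt (∑ k, x k ^ 2) := by
  set T := ∑ k, x k ^ 2 with hT
  have hTnn : 0 ≤ T := Finset.sum_nonneg fun k _ => sq_nonneg _
  have hpow : (0:ℝ) < 2 ^ n := by positivity
  set c := coef (g x) with hc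
  -- Parseval for g
  have P1 : ∑ A : Finset (Fin n), c A ^ 2 = T := by
    have := parseval (g x)
    have hg2 : ∑ b : Fin n → Bool, g x b ^ 2 = 2 ^ n * T := by
      have : ∀ b, g x b ^ 2 = S x b ^ 2 := fun b => by rw [g, sq_abs]
      simp_rw [this]
      exact sum_S_sq x
    rw [hg2] at this
    field_simp at this
    linarith
  -- weighted bound
  have P3 : ∑ A : Finset (Fin n), (A.card : ℝ) * c A ^ 2 ≤ T := by
    have hi : ∀ i : Fin n, ∑ A : Finset (Fin n), (if i ∈ A then c A ^ 2 else 0) ≤ x i ^ 2 := by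
      intro i
      have hp := parseval (Dg x i)
      have hb := sum_Dg_sq_le x i
      rw [hp] at hb
      have h4 : ∑ A : Finset (Fin n), coef (Dg x i) A ^ 2
          = ∑ A : Finset (Fin n), (if i ∈ A then c A ^ 2 else 0) := by
        congr 1; ext A
        rw [coef_Dg]
        by_cases hiA : i ∈ A <;> simp [hiA, hc]
      rw [h4] at hb
      nlinarith
    have hswap : ∑ A : Finset (Fin n), (A.card : ℝ) * c A ^ 2
        = ∑ i : Fin n, ∑ A : Finset (Fin n), (if i ∈ A then c A ^ 2 else 0) := by
      rw [Finset.sum_comm]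
      congr 1; ext A
      rw [Finset.sum_ite_mem Finset.univ A fun _ => c A ^ 2, Finset.univ_inter,
        Finset.sum_const, nsmul_eq_mul]
    calc ∑ A : Finset (Fin n), (A.card : ℝ) * c A ^ 2
        = ∑ i : Fin n, ∑ A : Finset (Fin n), (if i ∈ A then c A ^ 2 else 0) := hswap
      _ ≤ ∑ i, x i ^ 2 := Finset.sum_le_sum fun i _ => hi i
      _ = T := rfl
  -- nonempty sets contribute at most T/2
  have P4 : ∑ A ∈ Finset.univ.erase (∅ : Finset (Fin n)), c A ^ 2 ≤ T / 2 := by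
    have hterm : ∀ A ∈ Finset.univ.erase (∅ : Finset (Fin n)),
        c A ^ 2 ≤ (A.card : ℝ) / 2 * c A ^ 2 := by
      intro A hA
      have hAne : A ≠ ∅ := (Finset.mem_erase.mp hA).1
      by_cases hodd : Odd A.card
      · rw [hc, coef_g_odd x hodd]
        norm_num
      · have heven : Even A.card := Nat.not_odd_iff_even.mp hodd
        have hcard : 2 ≤ A.card := by
          rcases Nat.lt_or_ge A.card 2 with h | h
          · interval_cases h' : A.card
            · exact absurd (Finset.card_eq_zero.mp h') hAne
            · exact absurd heven (by simp [h'])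
          · exact h
        have : (1:ℝ) ≤ (A.card : ℝ) / 2 := by
          have : (2:ℝ) ≤ (A.card : ℝ) := by exact_mod_cast hcard
          linarith
        nlinarith [sq_nonneg (c A)]
    calc ∑ A ∈ Finset.univ.erase (∅ : Finset (Fin n)), c A ^ 2
        ≤ ∑ A ∈ Finset.univ.erase (∅ : Finset (Fin n)), (A.card : ℝ) / 2 * c A ^ 2 :=
          Finset.sum_le_sum hterm
      _ ≤ ∑ A : Finset (Fin n), (A.card : ℝ) / 2 * c A ^ 2 := by
          refine Finset.sum_le_sum_of_subset_of_nonneg (Finset.erase_subset _ _) ?_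
          intro A _ _
          positivity
      _ = (∑ A : Finset (Fin n), (A.card : ℝ) * c A ^ 2) / 2 := by
          rw [Finset.sum_div]
          congr 1; ext A; ring
      _ ≤ T / 2 := by linarith
  have hsplit : c ∅ ^ 2 + ∑ A ∈ Finset.univ.erase (∅ : Finset (Fin n)), c A ^ 2 = T := by
    rw [← P1, Finset.add_sum_erase Finset.univ (fun A => c A ^ 2) (Finset.mem_univ ∅)]
  have hc0sq : T / 2 ≤ c ∅ ^ 2 := by linarith
  have hc0 : c ∅ = (∑ b : Fin n → Bool, g x b) / 2 ^ n := by
    rw [hc, coef]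
    congr 1
    refine Finset.sum_congr rfl fun b _ => ?_
    rw [chi_empty, mul_one]
  have hc0nn : 0 ≤ c ∅ := by
    rw [hc0]
    exact div_nonneg (Finset.sum_nonneg fun b _ => abs_nonneg _) (le_of_lt hpow)
  constructor
  · rw [← hc0]
    have h1 : (1 / Real.sqrt 2) * Real.sqrt T = Real.sqrt (T / 2) := by
      rw [div_eq_mul_inv T, Real.sqrt_mul hTnn, Real.sqrt_inv]
      ring
    rw [h1]
    calc Real.sqrt (T / 2) ≤ Real.sqrt (c ∅ ^ 2) := Real.sqrt_le_sqrt hc0sq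
      _ = c ∅ := Real.sqrt_sq hc0nn
  · rw [← hc0]
    -- c∅ ≤ √T via Cauchy–Schwarz
    have hCS : (∑ b : Fin n → Bool, g x b) ^ 2
        ≤ 2 ^ n * ∑ b : Fin n → Bool, g x b ^ 2 := by
      have := sq_sum_le_card_mul_sum_sq (s := (Finset.univ : Finset (Fin n → Bool)))
        (f := g x)
      simpa [Finset.card_univ] using this
    have hg2 : ∑ b : Fin n → Bool, g x b ^ 2 = 2 ^ n * T := by
      have : ∀ b, g x b ^ 2 = S x b ^ 2 := fun b => by rw [g, sq_abs]
      simp_rw [this]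
      exact sum_S_sq x
    have hsq : (c ∅) ^ 2 ≤ T := by
      rw [hc0, div_pow]
      rw [hg2] at hCS
      rw [div_le_iff₀ (by positivity)]
      calc (∑ b : Fin n → Bool, g x b) ^ 2 ≤ 2 ^ n * (2 ^ n * T) := hCS
        _ = T * ((2:ℝ) ^ n) ^ 2 := by ring
    calc c ∅ = Real.sqrt ((c ∅) ^ 2) := (Real.sqrt_sq hc0nn).symm
      _ ≤ Real.sqrt T := Real.sqrt_le_sqrt hsq

end WithX

end KhinAux


open KhinAux in
theorem khintchine_reduction {Ω : Type*} [MeasurableSpace Ω]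
    (μ : Measure Ω) [IsProbabilityMeasure μ] {n : ℕ} (x : Fin n → ℝ)
    (ε : Fin n → Ω → ℝ) (hmeas : ∀ k, Measurable (ε k))
    (hindep : iIndepFun ε μ)
    (hrad : ∀ k, IsRademacher μ (ε k)) :
    ∫ ω, |∑ k, ε k ω * x k| ∂μ = (∑ b : Fin n → Bool, g x b) / 2 ^ n := by
  classical
  set Ab : (Fin n → Bool) → Set Ω := fun b => ⋂ k, ε k ⁻¹' {rsign (b k)} with hAb
  have hAbm : ∀ b, MeasurableSet (Ab b) :=
    fun b => MeasurableSet.iInter fun k => hmeas k (measurableSet_singleton _)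
  have hrs : ∀ k (v : Bool), μ (ε k ⁻¹' {rsign v}) = 1 / 2 := by
    intro k v
    cases v
    · simpa [rsign] using (hrad k).2
    · simpa [rsign] using (hrad k).1
  have hμAb : ∀ b, μ (Ab b) = (1 / 2 : ℝ≥0∞) ^ n := by
    intro b
    have := hindep.measure_inter_preimage_eq_mul Finset.univ
      (sets := fun k => ({rsign (b k)} : Set ℝ)) (fun i _ => measurableSet_singleton _)
    simp only [Finset.mem_univ, Set.iInter_true] at this
    rw [hAb]
    simp only
    rw [this, Finset.prod_congr rfl fun k _ => hrs k (b k), Finset.prod_const,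
      Finset.card_univ, Fintype.card_fin]
  have hmemAb : ∀ b ω, ω ∈ Ab b ↔ ∀ k, ε k ω = rsign (b k) := by
    intro b ω
    simp [hAb, Set.mem_iInter]
  have hdisj : ∀ b b' : Fin n → Bool, b ≠ b' → Ab b ∩ Ab b' = ∅ := by
    intro b b' hne
    ext ω
    simp only [Set.mem_inter_iff, Set.mem_empty_iff_false, iff_false, not_and]
    intro h1 h2
    apply hne
    funext k
    have e1 := (hmemAb b ω).mp h1 k
    have e2 := (hmemAb b' ω).mp h2 k
    have : rsign (b k) = rsign (b' k) := by rw [← e1, ← e2]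
    revert this
    cases b k <;> cases b' k <;> simp [rsign] <;> norm_num
  set U : Set Ω := ⋃ b, Ab b with hU
  have hUc : μ Uᶜ = 0 := by
    have hk : ∀ k, μ ((ε k ⁻¹' {1} ∪ ε k ⁻¹' {-1})ᶜ) = 0 := by
      intro k
      have hd : Disjoint (ε k ⁻¹' {1}) (ε k ⁻¹' {-1}) := by
        apply Disjoint.preimage
        simp only [Set.disjoint_singleton]
        norm_num
      have hm1 : μ (ε k ⁻¹' {1} ∪ ε k ⁻¹' {-1}) = 1 := by
        rw [measure_union hd (hmeas k (measurableSet_singleton _)), (hrad k).1, (hrad k).2,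
          ENNReal.add_halves]
      rw [measure_compl ((hmeas k (measurableSet_singleton _)).union
        (hmeas k (measurableSet_singleton _))) (measure_ne_top μ _), hm1, measure_univ,
        tsub_self]
    have hincl : Uᶜ ⊆ ⋃ k, (ε k ⁻¹' {1} ∪ ε k ⁻¹' {-1})ᶜ := by
      intro ω hω
      by_contra hcon
      simp only [Set.mem_iUnion, not_exists, Set.mem_compl_iff, not_not] at hcon
      apply hω
      refine Set.mem_iUnion.mpr ⟨fun k => if ε k ω = 1 then true else false, ?_⟩
      rw [hmemAb]
      intro k
      by_cases h1 : ε k ω = 1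
      · simp [h1, rsign]
      · have h2 : ε k ω = -1 := by
          have := hcon k
          simp only [Set.mem_union, Set.mem_preimage, Set.mem_singleton_iff] at this
          tauto
        simp only [h2]
        norm_num [rsign]
    exact measure_mono_null hincl (measure_iUnion_null fun k => hk k)
  set f : Ω → ℝ := fun ω => |∑ k, ε k ω * x k| with hf
  set G : Ω → ℝ := fun ω => ∑ b : Fin n → Bool, (Ab b).indicator (fun _ => g x b) ω with hG
  have hae : f =ᵐ[μ] G := by
    rw [Filter.eventuallyEq_iff_exists_mem]
    refine ⟨U, ?_, ?_⟩
    · rw [mem_ae_iff]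
      simpa using hUc
    · intro ω hω
      obtain ⟨b₀, hb₀⟩ := Set.mem_iUnion.mp hω
      have hε : ∀ k, ε k ω = rsign (b₀ k) := (hmemAb b₀ ω).mp hb₀
      have hfω : f ω = g x b₀ := by
        rw [hf]
        simp only
        rw [g, S]
        congr 1
        exact Finset.sum_congr rfl fun k _ => by rw [hε k]
      have hGω : G ω = g x b₀ := by
        rw [hG]
        simp only
        rw [Finset.sum_eq_single b₀]
        · rw [Set.indicator_of_mem hb₀]
        · intro b _ hbne
          apply Set.indicator_of_notMem
          intro hmem
          have := hdisj b b₀ hbne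
          have : ω ∈ Ab b ∩ Ab b₀ := ⟨hmem, hb₀⟩
          rw [hdisj b b₀ hbne] at this
          exact this
        · intro h; exact absurd (Finset.mem_univ b₀) h
      rw [hfω, hGω]
  rw [integral_congr_ae hae, hG]
  rw [integral_finset_sum _ (fun b _ => (integrable_const (g x b)).indicator (hAbm b))]
  have hint : ∀ b, ∫ ω, (Ab b).indicator (fun _ => g x b) ω ∂μ = (1 / 2 : ℝ) ^ n * g x b := by
    intro b
    rw [integral_indicator_const _ (hAbm b), measureReal_def, hμAb b, smul_eq_mul]
    congr 1
    rw [ENNReal.toReal_pow]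
    norm_num
  rw [Finset.sum_congr rfl fun b _ => hint b, ← Finset.mul_sum]
  rw [div_pow, one_pow, div_mul_eq_mul_div, one_mul]

/-- Khintchine inequality: `(1/√2) ‖x‖₂ ≤ E|Σ_k ε_k x_k| ≤ ‖x‖₂` for a
Rademacher vector `ε` and fixed `x ∈ ℝⁿ`. -/
theorem khintchine_inequality {Ω : Type*} [MeasurableSpace Ω]
    (μ : Measure Ω) [IsProbabilityMeasure μ] {n : ℕ} (x : Fin n → ℝ)
    (ε : Fin n → Ω → ℝ) (hmeas : ∀ k, Measurable (ε k))
    (hindep : iIndepFun ε μ)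
    (hrad : ∀ k, IsRademacher μ (ε k)) :
    (1 / Real.sqrt 2) * Real.sqrt (∑ k, x k ^ 2)
        ≤ ∫ ω, |∑ k, ε k ω * x k| ∂μ ∧
      ∫ ω, |∑ k, ε k ω * x k| ∂μ ≤ Real.sqrt (∑ k, x k ^ 2) := by
  rw [khintchine_reduction μ x ε hmeas hindep hrad]
  exact KhinAux.main_comb x
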